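/- Let H₁, H₂ be real Hilbert spaces, S : H₁ → H₂ bounded linear, r, s, α > 0, and suppose sequences (u^k) ⊂ H₁, (λ^k) ⊂ H₂ and points u* ∈ H₁, λ* ∈ H₂ satisfy for all k: ⟨S(u^{k+1} − u^k), λ^{k+1} − λ^k⟩ ≥ (1/r)⟨u^{k+1} − u*, u^{k+1} − u^k⟩ + (1/s)⟨λ^{k+1} − λ*, λ^{k+1} − λ^k⟩ + α‖u^{k+1} − u*‖². If additionally (u^k) and (λ^k) are bounded and ‖u^{k+1} − u^k‖ → 0 and ‖λ^{k+1} − λ^k‖ → 0, then u^k → u* strongly in H₁. -/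

import Mathlib

/-- if the key inequality (seqU) holds for all `k`, the sequences
are bounded, and the successive differences tend to zero, then `u^k → u*`. -/
theorem stmt15 {H₁ H₂ : Type*} [NormedAddCommGroup H₁] [InnerProductSpace ℝ H₁]
    [NormedAddCommGroup H₂] [InnerProductSpace ℝ H₂] [CompleteSpace H₁] [CompleteSpace H₂]
    (S : H₁ →L[ℝ] H₂) (r s α : ℝ) (hr : 0 < r) (hs : 0 < s) (hα : 0 < α)
    (u : ℕ → H₁) (lam : ℕ → H₂) (ustar : H₁) (lamstar : H₂)
    (hineq : ∀ k : ℕ,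
      (inner ℝ (S (u (k + 1) - u k)) (lam (k + 1) - lam k) : ℝ) ≥
        (1 / r) * (inner ℝ (u (k + 1) - ustar) (u (k + 1) - u k) : ℝ)
        + (1 / s) * (inner ℝ (lam (k + 1) - lamstar) (lam (k + 1) - lam k) : ℝ)
        + α * ‖u (k + 1) - ustar‖ ^ 2)
    (hbdd : ∃ M : ℝ, ∀ k : ℕ, ‖u k‖ ≤ M ∧ ‖lam k‖ ≤ M)
    (hu : Filter.Tendsto (fun k => ‖u (k + 1) - u k‖) Filter.atTop (nhds 0))
    (hlam : Filter.Tendsto (fun k => ‖lam (k + 1) - lam k‖) Filter.atTop (nhds 0)) :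
    Filter.Tendsto u Filter.atTop (nhds ustar) := by
  obtain ⟨M, hM⟩ := hbdd
  set A := M + ‖ustar‖ with hAdef
  set B := M + ‖lamstar‖ with hBdef
  have hA : ∀ k : ℕ, ‖u (k + 1) - ustar‖ ≤ A := fun k =>
    (norm_sub_le _ _).trans (add_le_add_left (hM (k + 1)).1 _)
  have hB : ∀ k : ℕ, ‖lam (k + 1) - lamstar‖ ≤ B := fun k =>
    (norm_sub_le _ _).trans (add_le_add_left (hM (k + 1)).2 _)
  set g : ℕ → ℝ := fun k =>
    (‖S‖ * ‖u (k + 1) - u k‖ * ‖lam (k + 1) - lam k‖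
      + (1 / r) * (A * ‖u (k + 1) - u k‖)
      + (1 / s) * (B * ‖lam (k + 1) - lam k‖)) / α with hgdef
  have key : ∀ k : ℕ, ‖u (k + 1) - ustar‖ ^ 2 ≤ g k := by
    intro k
    rw [hgdef, le_div_iff₀ hα]
    have h1 := hineq k
    have hS : (inner ℝ (S (u (k + 1) - u k)) (lam (k + 1) - lam k) : ℝ) ≤
        ‖S‖ * ‖u (k + 1) - u k‖ * ‖lam (k + 1) - lam k‖ := by
      calc (inner ℝ (S (u (k + 1) - u k)) (lam (k + 1) - lam k) : ℝ)
          ≤ ‖S (u (k + 1) - u k)‖ * ‖lam (k + 1) - lam k‖ := real_inner_le_norm _ _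
        _ ≤ ‖S‖ * ‖u (k + 1) - u k‖ * ‖lam (k + 1) - lam k‖ := by
            gcongr
            exact S.le_opNorm _
    have h2 : -(A * ‖u (k + 1) - u k‖) ≤
        (inner ℝ (u (k + 1) - ustar) (u (k + 1) - u k) : ℝ) := by
      have h := abs_real_inner_le_norm (u (k + 1) - ustar) (u (k + 1) - u k)
      have h' := (abs_le.mp h).1
      nlinarith [hA k, norm_nonneg (u (k + 1) - u k)]
    have h3 : -(B * ‖lam (k + 1) - lam k‖) ≤
        (inner ℝ (lam (k + 1) - lamstar) (lam (k + 1) - lam k) : ℝ) := by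
      have h := abs_real_inner_le_norm (lam (k + 1) - lamstar) (lam (k + 1) - lam k)
      have h' := (abs_le.mp h).1
      nlinarith [hB k, norm_nonneg (lam (k + 1) - lam k)]
    have hr' : (0:ℝ) ≤ 1 / r := by positivity
    have hs' : (0:ℝ) ≤ 1 / s := by positivity
    have h2' := mul_le_mul_of_nonneg_left h2 hr'
    have h3' := mul_le_mul_of_nonneg_left h3 hs'
    nlinarith [h1, hS, h2', h3']
  have hg : Filter.Tendsto g Filter.atTop (nhds 0) := by
    have : Filter.Tendsto (fun k =>
        (‖S‖ * ‖u (k + 1) - u k‖ * ‖lam (k + 1) - lam k‖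
          + (1 / r) * (A * ‖u (k + 1) - u k‖)
          + (1 / s) * (B * ‖lam (k + 1) - lam k‖))) Filter.atTop (nhds 0) := by
      have t1 := ((tendsto_const_nhds (x := ‖S‖)).mul hu).mul hlam
      have t2 := (tendsto_const_nhds (x := (1/r))).mul ((tendsto_const_nhds (x := A)).mul hu)
      have t3 := (tendsto_const_nhds (x := (1/s))).mul ((tendsto_const_nhds (x := B)).mul hlam)
      simpa using (t1.add t2).add t3
    simpa only [zero_div] using this.div_const α
  have hf2 : Filter.Tendsto (fun k => ‖u (k + 1) - ustar‖ ^ 2) Filter.atTop (nhds 0) :=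
    tendsto_of_tendsto_of_tendsto_of_le_of_le tendsto_const_nhds hg
      (fun k => sq_nonneg _) key
  have hf : Filter.Tendsto (fun k => ‖u (k + 1) - ustar‖) Filter.atTop (nhds 0) := by
    have h := hf2.sqrt
    rw [Real.sqrt_zero] at h
    have heq : (fun k => Real.sqrt (‖u (k + 1) - ustar‖ ^ 2)) =
        fun k => ‖u (k + 1) - ustar‖ := funext fun k => Real.sqrt_sq (norm_nonneg _)
    rwa [heq] at h
  have hshift : Filter.Tendsto (fun k => u (k + 1)) Filter.atTop (nhds ustar) :=
    tendsto_iff_norm_sub_tendsto_zero.mpr hf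
  exact (Filter.tendsto_add_atTop_iff_nat 1).mp hshift
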